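/- Let X be a connected, locally path-connected, compact metric space with more than one point and with no cut points. Then X contains a simple closed curve (an embedded copy of S¹). -/

import Mathlib

open Set Topology Filter

set_option linter.unusedSectionVars false
set_option linter.unusedVariables false
set_option maxHeartbeats 1000000

namespace SCC

variable {X : Type} [MetricSpace X]

/-- Bundle of properties of a minimal gap-respecting set. -/
structure Good (γ : ℝ → X) (M : Set ℝ) : Prop where
  sub : M ⊆ Icc 0 1
  cl : IsClosed M
  mem0 : (0:ℝ) ∈ M
  mem1 : (1:ℝ) ∈ M
  gap : ∀ s ∈ M, ∀ t ∈ M, s < t → Ioo s t ∩ M = ∅ → γ s = γ t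
  mini : ∀ s ∈ M, ∀ t ∈ M, s < t → (Ioo s t ∩ M).Nonempty → γ s ≠ γ t

noncomputable def rr (M : Set ℝ) (x : ℝ) : ℝ := sSup (M ∩ Icc 0 x)
noncomputable def ll (M : Set ℝ) (x : ℝ) : ℝ := sInf (M ∩ Icc x 1)
noncomputable def dd (γ : ℝ → X) (M : Set ℝ) (x : ℝ) : X := γ (rr M x)

variable {γ : ℝ → X} {M : Set ℝ}



/-- The Zorn step: a minimal "gap-respecting" closed set for a path `γ`. -/
theorem exists_min_M (γ : ℝ → X) (hγ : Continuous γ) : ∃ M : Set ℝ, Good γ M := by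
  set S : Set (Set ℝ) := {K | K ⊆ Icc 0 1 ∧ IsClosed K ∧ 0 ∈ K ∧ 1 ∈ K ∧
      ∀ s ∈ K, ∀ t ∈ K, s < t → Ioo s t ∩ K = ∅ → γ s = γ t} with hS
  have hIccS : Icc 0 1 ∈ S := by
    refine ⟨le_refl _, isClosed_Icc, ⟨le_refl 0, zero_le_one⟩, ⟨zero_le_one, le_refl 1⟩,
      fun s hs t ht hst hgap => ?_⟩
    exfalso
    obtain ⟨x, hx⟩ := nonempty_Ioo.2 hst
    have : x ∈ Ioo s t ∩ Icc 0 1 :=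
      ⟨hx, ⟨hs.1.trans hx.1.le, hx.2.le.trans ht.2⟩⟩
    rw [hgap] at this; exact this
  obtain ⟨M, hMS⟩ : ∃ m, Minimal (· ∈ S) m := by
    apply zorn_superset
    intro c hcS hchain
    rcases c.eq_empty_or_nonempty with rfl | hcne
    · exact ⟨Icc 0 1, hIccS, by simp⟩
    refine ⟨⋂₀ c, ?_, fun s hs => sInter_subset_of_mem hs⟩
    obtain ⟨K₀, hK₀⟩ := hcne
    have hsub : ⋂₀ c ⊆ Icc 0 1 := (sInter_subset_of_mem hK₀).trans (hcS hK₀).1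
    have hcl : IsClosed (⋂₀ c) := isClosed_sInter fun K hK => (hcS hK).2.1
    have h0 : (0:ℝ) ∈ ⋂₀ c := fun K hK => (hcS hK).2.2.1
    have h1 : (1:ℝ) ∈ ⋂₀ c := fun K hK => (hcS hK).2.2.2.1
    refine ⟨hsub, hcl, h0, h1, fun s hs t ht hst hgap => ?_⟩
    have hts : 0 < t - s := by linarith
    have hεpos : ∀ n : ℕ, 0 < (t-s)/(n+3) := by
      intro n; positivity
    have hεhalf : ∀ n : ℕ, (t-s)/(n+3) < (t-s)/2 := by
      intro n
      apply div_lt_div_of_pos_left hts (by norm_num)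
      push_cast; linarith [Nat.cast_nonneg (α := ℝ) n]
    -- for each n, find K ∈ c avoiding the middle of (s,t)
    have hKn : ∀ n : ℕ, ∃ K ∈ c,
        K ∩ Icc (s + (t-s)/(n+3)) (t - (t-s)/(n+3)) = ∅ := by
      intro n
      by_contra hcon
      push_neg at hcon
      have hdir : Directed (· ⊇ ·)
          (fun K : c => (K : Set ℝ) ∩ Icc (s + (t-s)/(n+3)) (t - (t-s)/(n+3))) := by
        rintro ⟨K₁, hK₁⟩ ⟨K₂, hK₂⟩
        rcases hchain.total hK₁ hK₂ with h | h
        · exact ⟨⟨K₁, hK₁⟩, le_refl _, inter_subset_inter_left _ h⟩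
        · exact ⟨⟨K₂, hK₂⟩, inter_subset_inter_left _ h, le_refl _⟩
      have : (⋂ K : c, (K : Set ℝ) ∩ Icc (s + (t-s)/(n+3)) (t - (t-s)/(n+3))).Nonempty := by
        haveI : Nonempty c := ⟨⟨K₀, hK₀⟩⟩
        apply IsCompact.nonempty_iInter_of_directed_nonempty_isCompact_isClosed _ hdir
        · rintro ⟨K, hK⟩; exact hcon K hK
        · rintro ⟨K, hK⟩; exact isCompact_Icc.inter_left (hcS hK).2.1
        · rintro ⟨K, hK⟩; exact ((hcS hK).2.1).inter isClosed_Icc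
      obtain ⟨x, hx⟩ := this
      simp only [mem_iInter] at hx
      have hxM : x ∈ ⋂₀ c := fun K hK => ((hx ⟨K, hK⟩).1)
      have hxI : x ∈ Icc (s + (t-s)/(n+3)) (t - (t-s)/(n+3)) := (hx ⟨K₀, hK₀⟩).2
      have : x ∈ Ioo s t ∩ ⋂₀ c :=
        ⟨⟨by linarith [hxI.1, hεpos n], by linarith [hxI.2, hεpos n]⟩, hxM⟩
      rw [hgap] at this; exact this
    choose K hKc hKe using hKn
    set a : ℕ → ℝ := fun n => sSup (K n ∩ Icc s (s + (t-s)/(n+3))) with ha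
    set b : ℕ → ℝ := fun n => sInf (K n ∩ Icc (t - (t-s)/(n+3)) t) with hb
    have hamem : ∀ n, a n ∈ K n ∩ Icc s (s + (t-s)/(n+3)) := by
      intro n
      apply IsCompact.sSup_mem (isCompact_Icc.inter_left (hcS (hKc n)).2.1)
      exact ⟨s, hs (K n) (hKc n), le_refl s, by linarith [hεpos n]⟩
    have hbmem : ∀ n, b n ∈ K n ∩ Icc (t - (t-s)/(n+3)) t := by
      intro n
      apply IsCompact.sInf_mem (isCompact_Icc.inter_left (hcS (hKc n)).2.1)
      exact ⟨t, ht (K n) (hKc n), by linarith [hεpos n], le_refl t⟩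
    have hab : ∀ n, a n < b n := by
      intro n
      calc a n ≤ s + (t-s)/(n+3) := (hamem n).2.2
        _ < t - (t-s)/(n+3) := by linarith [hεhalf n]
        _ ≤ b n := (hbmem n).2.1
    have hγab : ∀ n, γ (a n) = γ (b n) := by
      intro n
      apply (hcS (hKc n)).2.2.2.2 _ (hamem n).1 _ (hbmem n).1 (hab n)
      ext x
      simp only [mem_inter_iff, mem_Ioo, mem_empty_iff_false, iff_false, not_and]
      intro hx hxK
      have hxe : x ∉ Icc (s + (t-s)/(n+3)) (t - (t-s)/(n+3)) := by
        intro hmem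
        have : x ∈ K n ∩ Icc (s + (t-s)/(n+3)) (t - (t-s)/(n+3)) := ⟨hxK, hmem⟩
        rw [hKe n] at this; exact this
      rw [mem_Icc, not_and_or] at hxe
      rcases hxe with h | h
      · push_neg at h
        have : x ∈ K n ∩ Icc s (s + (t-s)/(n+3)) :=
          ⟨hxK, (hamem n).2.1.trans hx.1.le, h.le⟩
        have hxa : x ≤ a n := le_csSup ((isCompact_Icc.inter_left (hcS (hKc n)).2.1).bddAbove) this
        exact absurd hx.1 (not_lt.2 hxa)
      · push_neg at h
        have : x ∈ K n ∩ Icc (t - (t-s)/(n+3)) t :=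
          ⟨hxK, h.le, hx.2.le.trans (hbmem n).2.2⟩
        have hxb : b n ≤ x := csInf_le ((isCompact_Icc.inter_left (hcS (hKc n)).2.1).bddBelow) this
        exact absurd hx.2 (not_lt.2 hxb)
    -- limits
    have hεlim : Tendsto (fun n : ℕ => (t-s)/(n+3)) atTop (nhds 0) := by
      apply Tendsto.div_atTop tendsto_const_nhds
      exact tendsto_atTop_add_const_right _ 3 tendsto_natCast_atTop_atTop
    have halim : Tendsto a atTop (nhds s) := by
      have h1 : Tendsto (fun n : ℕ => s + (t-s)/(n+3)) atTop (nhds s) := by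
        simpa using tendsto_const_nhds.add hεlim
      exact tendsto_of_tendsto_of_tendsto_of_le_of_le tendsto_const_nhds h1
        (fun n => (hamem n).2.1) (fun n => (hamem n).2.2)
    have hblim : Tendsto b atTop (nhds t) := by
      have h1 : Tendsto (fun n : ℕ => t - (t-s)/(n+3)) atTop (nhds t) := by
        simpa using tendsto_const_nhds.sub hεlim
      exact tendsto_of_tendsto_of_tendsto_of_le_of_le h1 tendsto_const_nhds
        (fun n => (hbmem n).2.1) (fun n => (hbmem n).2.2)
    have h1 : Tendsto (fun n => γ (a n)) atTop (nhds (γ s)) :=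
      (hγ.tendsto s).comp halim
    have h2 : Tendsto (fun n => γ (a n)) atTop (nhds (γ t)) := by
      have := (hγ.tendsto t).comp hblim
      simpa only [Function.comp_def, hγab] using this
    exact tendsto_nhds_unique h1 h2
  -- minimality consequence
  obtain ⟨hMsub, hMcl, hM0, hM1, hMgap⟩ := hMS.prop
  refine ⟨M, hMsub, hMcl, hM0, hM1, hMgap, fun s hsM t htM hst ⟨m, hm⟩ hγst => ?_⟩
  have hM'S : M \ Ioo s t ∈ S := by
    refine ⟨(diff_subset).trans hMsub, hMcl.sdiff isOpen_Ioo, ?_, ?_, ?_⟩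
    · exact ⟨hM0, fun h => absurd h.1 (not_lt.2 (hMsub hsM).1)⟩
    · exact ⟨hM1, fun h => absurd h.2 (not_lt.2 (hMsub htM).2)⟩
    intro x hx y hy hxy hgap'
    by_cases hMempty : Ioo x y ∩ M = ∅
    · exact hMgap x hx.1 y hy.1 hxy hMempty
    · obtain ⟨z, hz⟩ := nonempty_iff_ne_empty.2 hMempty
      have hzIoo : z ∈ Ioo s t := by
        by_contra hzn
        have : z ∈ Ioo x y ∩ (M \ Ioo s t) := ⟨hz.1, hz.2, hzn⟩
        rw [hgap'] at this; exact this
      have hxs : x = s := by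
        rcases lt_trichotomy x s with h | h | h
        · exfalso
          have : s ∈ Ioo x y ∩ (M \ Ioo s t) :=
            ⟨⟨h, lt_trans hzIoo.1 hz.1.2⟩, hsM, fun hc => lt_irrefl s hc.1⟩
          rw [hgap'] at this; exact this
        · exact h
        · exact absurd ⟨h, lt_trans hz.1.1 hzIoo.2⟩ hx.2
      have hyt : y = t := by
        rcases lt_trichotomy t y with h | h | h
        · exfalso
          have : t ∈ Ioo x y ∩ (M \ Ioo s t) :=
            ⟨⟨lt_trans hz.1.1 hzIoo.2, h⟩, htM, fun hc => lt_irrefl t hc.2⟩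
          rw [hgap'] at this; exact this
        · exact h.symm
        · exact absurd ⟨lt_trans hzIoo.1 hz.1.2, h⟩ hy.2
      rw [hxs, hyt]; exact hγst
  have := hMS.2 hM'S diff_subset
  exact (this hm.2).2 hm.1


lemma Good.cpt (h : Good γ M) : IsCompact M :=
  isCompact_Icc.of_isClosed_subset h.cl h.sub

lemma rr_mem (h : Good γ M) {x : ℝ} (hx : 0 ≤ x) : rr M x ∈ M ∩ Icc 0 x :=
  IsCompact.sSup_mem (h.cpt.inter_right isClosed_Icc) ⟨0, h.mem0, le_refl 0, hx⟩

lemma ll_mem (h : Good γ M) {x : ℝ} (hx : x ≤ 1) : ll M x ∈ M ∩ Icc x 1 :=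
  IsCompact.sInf_mem (h.cpt.inter_right isClosed_Icc) ⟨1, h.mem1, hx, le_refl 1⟩

lemma rr_eq (h : Good γ M) {x : ℝ} (hx : x ∈ M) : rr M x = x := by
  refine le_antisymm (csSup_le ⟨0, h.mem0, le_refl 0, (h.sub hx).1⟩ fun y hy => hy.2.2) ?_
  exact le_csSup ((h.cpt.inter_right isClosed_Icc).bddAbove) ⟨hx, (h.sub hx).1, le_refl x⟩

lemma ll_eq (h : Good γ M) {x : ℝ} (hx : x ∈ M) : ll M x = x := by
  refine le_antisymm ?_ (le_csInf ⟨1, h.mem1, (h.sub hx).2, le_refl 1⟩ fun y hy => hy.2.1)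
  exact csInf_le ((h.cpt.inter_right isClosed_Icc).bddBelow) ⟨hx, le_refl x, (h.sub hx).2⟩

lemma gap_empty (h : Good γ M) {x : ℝ} (hx : x ∈ Icc (0:ℝ) 1) :
    Ioo (rr M x) (ll M x) ∩ M = ∅ := by
  ext m
  simp only [mem_inter_iff, mem_Ioo, mem_empty_iff_false, iff_false, not_and]
  rintro ⟨h1, h2⟩ hm
  rcases le_total m x with hle | hle
  · have : m ≤ rr M x :=
      le_csSup ((h.cpt.inter_right isClosed_Icc).bddAbove) ⟨hm, (h.sub hm).1, hle⟩
    exact absurd h1 (not_lt.2 this)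
  · have : ll M x ≤ m :=
      csInf_le ((h.cpt.inter_right isClosed_Icc).bddBelow) ⟨hm, hle, (h.sub hm).2⟩
    exact absurd h2 (not_lt.2 this)

lemma dd_ll (h : Good γ M) {x : ℝ} (hx : x ∈ Icc (0:ℝ) 1) : dd γ M x = γ (ll M x) := by
  have h1 := rr_mem h hx.1
  have h2 := ll_mem h hx.2
  rcases eq_or_lt_of_le (h1.2.2.trans h2.2.1) with he | hlt
  · rw [dd, he]
  · exact h.gap _ h1.1 _ h2.1 hlt (gap_empty h hx)

lemma rr_mono (h : Good γ M) {x y : ℝ} (hx : 0 ≤ x) (hxy : x ≤ y) : rr M x ≤ rr M y :=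
  csSup_le_csSup ((h.cpt.inter_right isClosed_Icc).bddAbove)
    ⟨0, h.mem0, le_refl 0, hx⟩ (inter_subset_inter_right _ (Icc_subset_Icc (le_refl 0) hxy))

lemma dd_cont (h : Good γ M) (hγ : Continuous γ) : ContinuousOn (dd γ M) (Icc 0 1) := by
  intro x₀ hx₀
  rw [Metric.continuousWithinAt_iff]
  intro ε hε
  by_cases hx₀M : x₀ ∈ M
  · obtain ⟨η, hη, hball⟩ := Metric.continuousAt_iff.1 (hγ.continuousAt (x := x₀)) ε hε
    refine ⟨η, hη, fun {x} hx hdist => ?_⟩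
    have hdd₀ : dd γ M x₀ = γ x₀ := by rw [dd, rr_eq h hx₀M]
    rcases le_total x₀ x with hle | hle
    · have h1 : rr M x₀ ≤ rr M x := rr_mono h hx₀.1 hle
      rw [rr_eq h hx₀M] at h1
      have h2 : rr M x ≤ x := (rr_mem h hx.1).2.2
      have : dist (rr M x) x₀ < η := by
        rw [Real.dist_eq, abs_lt] at hdist ⊢
        exact ⟨by linarith [hdist.1, hdist.2], by linarith [hdist.2]⟩
      rw [hdd₀, dd]
      exact hball this
    · have h1 : x ≤ ll M x := (ll_mem h hx.2).2.1
      have h2 : ll M x ≤ x₀ :=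
        csInf_le ((h.cpt.inter_right isClosed_Icc).bddBelow) ⟨hx₀M, hle, (h.sub hx₀M).2⟩
      have : dist (ll M x) x₀ < η := by
        rw [Real.dist_eq, abs_lt] at hdist ⊢
        exact ⟨by linarith [hdist.1], by linarith [hdist.1]⟩
      rw [hdd₀, dd_ll h hx]
      exact hball this
  · have h1 : rr M x₀ < x₀ :=
      lt_of_le_of_ne (rr_mem h hx₀.1).2.2 (fun hc => hx₀M (hc ▸ (rr_mem h hx₀.1).1))
    have h2 : x₀ < ll M x₀ :=
      lt_of_le_of_ne (ll_mem h hx₀.2).2.1 (fun hc => hx₀M (hc ▸ (ll_mem h hx₀.2).1))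
    refine ⟨min (x₀ - rr M x₀) (ll M x₀ - x₀), lt_min (by linarith) (by linarith),
      fun {x} hx hdist => ?_⟩
    have hxlt : rr M x₀ < x ∧ x < ll M x₀ := by
      rw [Real.dist_eq, abs_lt] at hdist
      have ha := min_le_left (x₀ - rr M x₀) (ll M x₀ - x₀)
      have hb := min_le_right (x₀ - rr M x₀) (ll M x₀ - x₀)
      exact ⟨by linarith [hdist.1], by linarith [hdist.2]⟩
    have hseteq : M ∩ Icc 0 x = M ∩ Icc 0 x₀ := by
      ext m
      simp only [mem_inter_iff, mem_Icc]
      refine and_congr_right fun hm => and_congr_right fun hm0 => ?_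
      constructor
      · intro hmx
        by_contra hc
        push_neg at hc
        have : m ∈ Ioo (rr M x₀) (ll M x₀) ∩ M :=
          ⟨⟨lt_trans h1 hc, lt_of_le_of_lt hmx hxlt.2⟩, hm⟩
        rw [gap_empty h hx₀] at this; exact this
      · intro hmx
        by_contra hc
        push_neg at hc
        have : m ∈ Ioo (rr M x₀) (ll M x₀) ∩ M :=
          ⟨⟨lt_trans hxlt.1 hc, lt_of_le_of_lt hmx h2⟩, hm⟩
        rw [gap_empty h hx₀] at this; exact this
    have : dd γ M x = dd γ M x₀ := by rw [dd, dd, rr, rr, hseteq]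
    rw [this]
    simpa using hε

lemma dd_int (h : Good γ M) {x y z : ℝ} (hx : x ∈ Icc (0:ℝ) 1) (hy : y ∈ Icc (0:ℝ) 1)
    (hz : z ∈ Icc x y) (he : dd γ M x = dd γ M y) : dd γ M z = dd γ M x := by
  have h1 : rr M x ≤ rr M z := rr_mono h hx.1 hz.1
  have h2 : rr M z ≤ rr M y := rr_mono h (hx.1.trans hz.1) hz.2
  rcases eq_or_lt_of_le (h1.trans h2) with heq | hlt
  · have hzx : rr M z = rr M x := le_antisymm (heq ▸ h2) h1
    unfold dd
    rw [hzx]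
  · have hgap2 : Ioo (rr M x) (rr M y) ∩ M = ∅ := by
      by_contra hc
      exact h.mini _ (rr_mem h hx.1).1 _ (rr_mem h (hx.1.trans hz.1 |>.trans hz.2)).1 hlt
        (nonempty_iff_ne_empty.2 hc) he
    rcases eq_or_lt_of_le h1 with he1 | hl1
    · unfold dd; rw [← he1]
    rcases eq_or_lt_of_le h2 with he2 | hl2
    · unfold dd at he ⊢; rw [he2, ← he]
    exfalso
    have : rr M z ∈ Ioo (rr M x) (rr M y) ∩ M := ⟨⟨hl1, hl2⟩, (rr_mem h (hx.1.trans hz.1)).1⟩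
    rw [hgap2] at this; exact this


def cls (γ : ℝ → X) (M : Set ℝ) (x : ℝ) : Set ℝ := Icc 0 1 ∩ dd γ M ⁻¹' {dd γ M x}
noncomputable def uu (γ : ℝ → X) (M : Set ℝ) (x : ℝ) : ℝ := sInf (cls γ M x)
noncomputable def vv (γ : ℝ → X) (M : Set ℝ) (x : ℝ) : ℝ := sSup (cls γ M x)

variable {γ : ℝ → X} {M : Set ℝ}

lemma cls_closed (h : Good γ M) (hγ : Continuous γ) (x : ℝ) : IsClosed (cls γ M x) :=
  (dd_cont h hγ).preimage_isClosed_of_isClosed isClosed_Icc isClosed_singleton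

lemma cls_cpt (h : Good γ M) (hγ : Continuous γ) (x : ℝ) : IsCompact (cls γ M x) :=
  isCompact_Icc.of_isClosed_subset (cls_closed h hγ x) (inter_subset_left)

lemma cls_self {x : ℝ} (hx : x ∈ Icc (0:ℝ) 1) : x ∈ cls γ M x := ⟨hx, rfl⟩

lemma uu_mem (h : Good γ M) (hγ : Continuous γ) {x : ℝ} (hx : x ∈ Icc (0:ℝ) 1) :
    uu γ M x ∈ cls γ M x :=
  (cls_cpt h hγ x).sInf_mem ⟨x, cls_self hx⟩

lemma vv_mem (h : Good γ M) (hγ : Continuous γ) {x : ℝ} (hx : x ∈ Icc (0:ℝ) 1) :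
    vv γ M x ∈ cls γ M x :=
  (cls_cpt h hγ x).sSup_mem ⟨x, cls_self hx⟩

lemma uu_le (h : Good γ M) (hγ : Continuous γ) {x : ℝ} (hx : x ∈ Icc (0:ℝ) 1) :
    uu γ M x ≤ x := csInf_le (cls_cpt h hγ x).bddBelow (cls_self hx)

lemma le_vv (h : Good γ M) (hγ : Continuous γ) {x : ℝ} (hx : x ∈ Icc (0:ℝ) 1) :
    x ≤ vv γ M x := le_csSup (cls_cpt h hγ x).bddAbove (cls_self hx)

lemma cls_eq (h : Good γ M) (hγ : Continuous γ) {x : ℝ} (hx : x ∈ Icc (0:ℝ) 1) :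
    cls γ M x = Icc (uu γ M x) (vv γ M x) := by
  apply Subset.antisymm
  · intro y hy
    exact ⟨csInf_le (cls_cpt h hγ x).bddBelow hy, le_csSup (cls_cpt h hγ x).bddAbove hy⟩
  · intro z hz
    have hu := uu_mem h hγ hx
    have hv := vv_mem h hγ hx
    have he : dd γ M (uu γ M x) = dd γ M (vv γ M x) := by
      rw [hu.2, hv.2]
    have := dd_int h hu.1 hv.1 hz he
    exact ⟨⟨hu.1.1.trans hz.1, hz.2.trans hv.1.2⟩, by rw [mem_preimage, this, hu.2]; rfl⟩

lemma cls_congr {x y : ℝ} (he : dd γ M x = dd γ M y) : cls γ M x = cls γ M y := by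
  unfold cls; rw [he]

lemma uu_congr {x y : ℝ} (he : dd γ M x = dd γ M y) : uu γ M x = uu γ M y := by
  unfold uu; rw [cls_congr he]

lemma vv_congr {x y : ℝ} (he : dd γ M x = dd γ M y) : vv γ M x = vv γ M y := by
  unfold vv; rw [cls_congr he]

lemma dd_uu (h : Good γ M) (hγ : Continuous γ) {x : ℝ} (hx : x ∈ Icc (0:ℝ) 1) :
    dd γ M (uu γ M x) = dd γ M x := (uu_mem h hγ hx).2

lemma dd_vv (h : Good γ M) (hγ : Continuous γ) {x : ℝ} (hx : x ∈ Icc (0:ℝ) 1) :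
    dd γ M (vv γ M x) = dd γ M x := (vv_mem h hγ hx).2

lemma vv_idem (h : Good γ M) (hγ : Continuous γ) {x : ℝ} (hx : x ∈ Icc (0:ℝ) 1) :
    vv γ M (vv γ M x) = vv γ M x := vv_congr (dd_vv h hγ hx)

lemma uu_idem (h : Good γ M) (hγ : Continuous γ) {x : ℝ} (hx : x ∈ Icc (0:ℝ) 1) :
    uu γ M (uu γ M x) = uu γ M x := uu_congr (dd_uu h hγ hx)

lemma vv_mem_Icc (h : Good γ M) (hγ : Continuous γ) {x : ℝ} (hx : x ∈ Icc (0:ℝ) 1) :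
    vv γ M x ∈ Icc (0:ℝ) 1 := (vv_mem h hγ hx).1

lemma uu_mem_Icc (h : Good γ M) (hγ : Continuous γ) {x : ℝ} (hx : x ∈ Icc (0:ℝ) 1) :
    uu γ M x ∈ Icc (0:ℝ) 1 := (uu_mem h hγ hx).1

/-- distinct classes are strictly separated -/
lemma cls_sep (h : Good γ M) (hγ : Continuous γ) {x y : ℝ} (hx : x ∈ Icc (0:ℝ) 1)
    (hy : y ∈ Icc (0:ℝ) 1) (hxy : x < y) (hne : dd γ M x ≠ dd γ M y) :
    vv γ M x < uu γ M y := by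
  by_contra hc
  push_neg at hc
  set m := max (uu γ M x) (uu γ M y) with hm
  have hmx : m ∈ cls γ M x := by
    rw [cls_eq h hγ hx]
    exact ⟨le_max_left _ _, max_le ((uu_le h hγ hx).trans (le_vv h hγ hx)) hc⟩
  have hmy : m ∈ cls γ M y := by
    rw [cls_eq h hγ hy]
    refine ⟨le_max_right _ _, max_le ?_ ((uu_le h hγ hy).trans (le_vv h hγ hy))⟩
    exact ((uu_le h hγ hx).trans (hxy.le.trans (le_vv h hγ hy)))
  exact hne (hmx.2.symm.trans hmy.2)


lemma dd_def (γ : ℝ → X) (M : Set ℝ) (x : ℝ) : dd γ M x = γ (rr M x) := rfl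

lemma dd_mem_cls (h : Good γ M) (hγ : Continuous γ) {x z : ℝ} (hx : x ∈ Icc (0:ℝ) 1)
    (hz : z ∈ Icc (uu γ M x) (vv γ M x)) : dd γ M z = dd γ M x := by
  have hm : z ∈ cls γ M x := by rw [cls_eq h hγ hx]; exact hz
  simpa using hm.2

lemma dd01 (h : Good γ M) (hγ : Continuous γ) (hne : γ 0 ≠ γ 1) :
    dd γ M 0 ≠ dd γ M 1 := by
  show γ (rr M 0) ≠ γ (rr M 1)
  rw [rr_eq h h.mem0, rr_eq h h.mem1]
  exact hne

lemma dd0_mem : (0:ℝ) ∈ Icc (0:ℝ) 1 := ⟨le_refl 0, zero_le_one⟩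
lemma dd1_mem : (1:ℝ) ∈ Icc (0:ℝ) 1 := ⟨zero_le_one, le_refl 1⟩

noncomputable def dyQ (γ : ℝ → X) (M : Set ℝ) : ℕ → ℕ → ℝ
  | 0, k => if k = 0 then 0 else 1
  | (n+1), k =>
    if k % 2 = 0 then dyQ γ M n (k / 2)
    else (vv γ M (dyQ γ M n (k / 2)) + uu γ M (dyQ γ M n (k / 2 + 1))) / 2

lemma dyQ_props (h : Good γ M) (hγ : Continuous γ) (hne : γ 0 ≠ γ 1) : ∀ n : ℕ,
    (dyQ γ M n 0 = 0) ∧ (dyQ γ M n (2^n) = 1) ∧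
    (∀ k, k ≤ 2^n → dyQ γ M n k ∈ Icc (0:ℝ) 1) ∧
    (∀ k, k < 2^n → vv γ M (dyQ γ M n k) < uu γ M (dyQ γ M n (k+1))) := by
  intro n
  induction n with
  | zero =>
    refine ⟨by simp [dyQ], by simp [dyQ], fun k hk => ?_, fun k hk => ?_⟩
    · by_cases h0 : k = 0
      · simp only [dyQ, if_pos h0]; exact dd0_mem
      · simp only [dyQ, if_neg h0]; exact dd1_mem
    · interval_cases k
      simp only [dyQ, if_pos rfl, if_neg one_ne_zero]
      exact cls_sep h hγ dd0_mem dd1_mem one_pos (dd01 h hγ hne)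
  | succ n ih =>
    obtain ⟨ih0, ihtop, ihmem, ihsep⟩ := ih
    -- midpoint helper facts
    have hmid : ∀ j, j < 2^n →
        vv γ M (dyQ γ M n j) < uu γ M (dyQ γ M (n+1) (2*j+1)) ∧
        vv γ M (dyQ γ M (n+1) (2*j+1)) < uu γ M (dyQ γ M n (j+1)) ∧
        dyQ γ M (n+1) (2*j+1) ∈ Icc (0:ℝ) 1 := by
      intro j hj
      have hQj := ihmem j hj.le
      have hQj1 := ihmem (j+1) hj
      have hsep := ihsep j hj
      set s := vv γ M (dyQ γ M n j) with hs
      set t := uu γ M (dyQ γ M n (j+1)) with ht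
      have hsmem : s ∈ Icc (0:ℝ) 1 := vv_mem_Icc h hγ hQj
      have htmem : t ∈ Icc (0:ℝ) 1 := uu_mem_Icc h hγ hQj1
      have hz : dyQ γ M (n+1) (2*j+1) = (s + t)/2 := by
        have e1 : (2*j+1) / 2 = j := by omega
        simp only [dyQ]
        rw [if_neg (by omega), e1]
      have hzmem : dyQ γ M (n+1) (2*j+1) ∈ Icc (0:ℝ) 1 := by
        rw [hz]; constructor <;> [nlinarith [hsmem.1, htmem.1]; nlinarith [hsmem.2, htmem.2]]
      have hzlow : s < dyQ γ M (n+1) (2*j+1) := by rw [hz]; linarith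
      have hzhigh : dyQ γ M (n+1) (2*j+1) < t := by rw [hz]; linarith
      refine ⟨?_, ?_, hzmem⟩
      · -- s < uu z
        by_contra hc
        push_neg at hc
        have hscls : dd γ M s = dd γ M (dyQ γ M (n+1) (2*j+1)) :=
          dd_mem_cls h hγ hzmem ⟨hc, hzlow.le.trans (le_vv h hγ hzmem)⟩
        have h2 : s = vv γ M (dyQ γ M (n+1) (2*j+1)) :=
          (vv_idem h hγ hQj).symm.trans (vv_congr hscls)
        have h3 := le_vv h hγ hzmem
        rw [← h2] at h3
        linarith
      · -- vv z < t
        by_contra hc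
        push_neg at hc
        have htcls : dd γ M t = dd γ M (dyQ γ M (n+1) (2*j+1)) :=
          dd_mem_cls h hγ hzmem ⟨(uu_le h hγ hzmem).trans hzhigh.le, hc⟩
        have h2 : t = uu γ M (dyQ γ M (n+1) (2*j+1)) :=
          (uu_idem h hγ hQj1).symm.trans (uu_congr htcls)
        have h3 := uu_le h hγ hzmem
        rw [← h2] at h3
        linarith
    have heven : ∀ j, dyQ γ M (n+1) (2*j) = dyQ γ M n j := by
      intro j
      simp only [dyQ]
      rw [if_pos (by omega)]
      congr 1; omega
    refine ⟨?_, ?_, ?_, ?_⟩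
    · have := heven 0; simpa [ih0] using this
    · have := heven (2^n); rw [pow_succ, mul_comm]; simpa [ihtop] using this
    · intro k hk
      rcases Nat.even_or_odd k with ⟨j, hj⟩ | ⟨j, hj⟩
      · subst hj
        rw [show j + j = 2 * j by ring, heven]
        exact ihmem j (by omega)
      · subst hj
        exact (hmid j (by omega)).2.2
    · intro k hk
      rcases Nat.even_or_odd k with ⟨j, hj⟩ | ⟨j, hj⟩
      · subst hj
        rw [show j + j = 2 * j by ring, heven, show 2 * j + 1 = 2*j+1 from rfl]
        exact (hmid j (by omega)).1
      · subst hj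
        rw [show 2 * j + 1 + 1 = 2 * (j+1) by ring, heven]
        exact (hmid j (by omega)).2.1

lemma dyQ_lift (m : ℕ) : ∀ n k, dyQ γ M (n+m) (k * 2^m) = dyQ γ M n k := by
  induction m with
  | zero => intro n k; simp
  | succ m ih =>
    intro n k
    have : dyQ γ M (n+(m+1)) (k * 2^(m+1)) = dyQ γ M (n+m) (k * 2^(m+1) / 2) := by
      show dyQ γ M ((n+m)+1) (k * 2^(m+1)) = _
      simp only [dyQ]
      rw [if_pos (by rw [pow_succ, ← Nat.mul_assoc]; exact Nat.mul_mod_left _ 2)]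
    rw [this, show k * 2^(m+1)/2 = k * 2^m by
      rw [pow_succ, ← Nat.mul_assoc]; exact Nat.mul_div_cancel _ two_pos, ih]

lemma dyQ_sep_level (h : Good γ M) (hγ : Continuous γ) (hne : γ 0 ≠ γ 1)
    {n k k' : ℕ} (hkk : k < k') (hk' : k' ≤ 2^n) :
    vv γ M (dyQ γ M n k) < uu γ M (dyQ γ M n k') := by
  obtain ⟨j, rfl⟩ : ∃ j, k' = k + j + 1 := ⟨k' - k - 1, by omega⟩
  clear hkk
  induction j with
  | zero => exact (dyQ_props h hγ hne n).2.2.2 k (by omega)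
  | succ j ih =>
    have h1 := ih (by omega)
    have h2 := (dyQ_props h hγ hne n).2.2.2 (k+j+1) (by omega)
    have hmem := (dyQ_props h hγ hne n).2.2.1 (k+j+1) (by omega)
    have h3 := (uu_le h hγ hmem).trans (le_vv h hγ hmem)
    calc vv γ M (dyQ γ M n k) < uu γ M (dyQ γ M n (k+j+1)) := h1
      _ ≤ vv γ M (dyQ γ M n (k+j+1)) := h3
      _ < uu γ M (dyQ γ M n (k+j+1+1)) := h2

lemma dyQ_lt (h : Good γ M) (hγ : Continuous γ) (hne : γ 0 ≠ γ 1)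
    {n k m j : ℕ} (hk : k ≤ 2^n) (hj : j ≤ 2^m) (hlt : (k:ℝ)/2^n < (j:ℝ)/2^m) :
    vv γ M (dyQ γ M n k) < uu γ M (dyQ γ M m j) := by
  have hnat : k * 2^m < j * 2^n := by
    have h2n : (0:ℝ) < 2^n := by positivity
    have h2m : (0:ℝ) < 2^m := by positivity
    have := (div_lt_div_iff₀ h2n h2m).1 hlt
    exact_mod_cast this
  have e1 : dyQ γ M (n+m) (k * 2^m) = dyQ γ M n k := dyQ_lift m n k
  have e2 : dyQ γ M (n+m) (j * 2^n) = dyQ γ M m j := by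
    rw [Nat.add_comm]; exact dyQ_lift n m j
  rw [← e1, ← e2]
  exact dyQ_sep_level h hγ hne hnat
    (by calc j * 2^n ≤ 2^m * 2^n := Nat.mul_le_mul_right _ hj
          _ = 2^(n+m) := by rw [← pow_add, Nat.add_comm])

lemma dyQ_eq {n k m j : ℕ} (heq : (k:ℝ)/2^n = (j:ℝ)/2^m) :
    dyQ γ M n k = dyQ γ M m j := by
  have hnat : k * 2^m = j * 2^n := by
    have h2n : (2:ℝ)^n ≠ 0 := by positivity
    have h2m : (2:ℝ)^m ≠ 0 := by positivity
    have : (k:ℝ) * 2^m = (j:ℝ) * 2^n := by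
      field_simp at heq
      linarith [heq]
    exact_mod_cast this
  have e1 : dyQ γ M (n+m) (k * 2^m) = dyQ γ M n k := dyQ_lift m n k
  have e2 : dyQ γ M (n+m) (j * 2^n) = dyQ γ M m j := by
    rw [Nat.add_comm]; exact dyQ_lift n m j
  rw [← e1, ← e2, hnat]

lemma dyQ_slot (h : Good γ M) (hγ : Continuous γ) (hne : γ 0 ≠ γ 1) :
    ∀ n, ∀ k, k < 2^n →
      uu γ M (dyQ γ M n (k+1)) - vv γ M (dyQ γ M n k) ≤ (1/2)^n := by
  intro n
  induction n with
  | zero =>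
    intro k hk
    interval_cases k
    have h1 := (dyQ_props h hγ hne 0).2.2.1 1 (by norm_num)
    have h0 := (dyQ_props h hγ hne 0).2.2.1 0 (by norm_num)
    have := (uu_mem_Icc h hγ h1).2
    have := (vv_mem_Icc h hγ h0).1
    simp only [pow_zero]
    linarith
  | succ n ih =>
    intro k hk
    have heven : ∀ j, dyQ γ M (n+1) (2*j) = dyQ γ M n j := by
      intro j
      simp only [dyQ]
      rw [if_pos (by omega)]
      congr 1; omega
    rcases Nat.even_or_odd k with ⟨j, hj⟩ | ⟨j, hj⟩
    · subst hj
      have hj2 : j < 2^n := by rw [pow_succ] at hk; omega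
      have hQj := (dyQ_props h hγ hne n).2.2.1 j hj2.le
      have hQj1 := (dyQ_props h hγ hne n).2.2.1 (j+1) hj2
      have hsep := (dyQ_props h hγ hne n).2.2.2 j hj2
      have hz : dyQ γ M (n+1) (2*j+1)
          = (vv γ M (dyQ γ M n j) + uu γ M (dyQ γ M n (j+1)))/2 := by
        have e1 : (2*j+1) / 2 = j := by omega
        simp only [dyQ]
        rw [if_neg (by omega), e1]
      have hzmem : dyQ γ M (n+1) (2*j+1) ∈ Icc (0:ℝ) 1 :=
        (dyQ_props h hγ hne (n+1)).2.2.1 (2*j+1) (by rw [pow_succ]; omega)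
      have huz := uu_le h hγ hzmem
      have := ih j hj2
      rw [show j + j = 2*j by ring, show 2*j+1 = 2*j+1 from rfl, heven]
      calc uu γ M (dyQ γ M (n+1) (2*j+1)) - vv γ M (dyQ γ M n j)
          ≤ dyQ γ M (n+1) (2*j+1) - vv γ M (dyQ γ M n j) := by linarith
        _ = (uu γ M (dyQ γ M n (j+1)) - vv γ M (dyQ γ M n j))/2 := by rw [hz]; ring
        _ ≤ (1/2)^(n+1) := by rw [pow_succ]; linarith
    · subst hj
      have hj2 : j < 2^n := by rw [pow_succ] at hk; omega
      have hQj := (dyQ_props h hγ hne n).2.2.1 j hj2.le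
      have hQj1 := (dyQ_props h hγ hne n).2.2.1 (j+1) hj2
      have hsep := (dyQ_props h hγ hne n).2.2.2 j hj2
      have hz : dyQ γ M (n+1) (2*j+1)
          = (vv γ M (dyQ γ M n j) + uu γ M (dyQ γ M n (j+1)))/2 := by
        have e1 : (2*j+1) / 2 = j := by omega
        simp only [dyQ]
        rw [if_neg (by omega), e1]
      have hzmem : dyQ γ M (n+1) (2*j+1) ∈ Icc (0:ℝ) 1 :=
        (dyQ_props h hγ hne (n+1)).2.2.1 (2*j+1) (by rw [pow_succ]; omega)
      have hvz := le_vv h hγ hzmem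
      have := ih j hj2
      rw [show 2*j+1+1 = 2*(j+1) by ring, heven]
      calc uu γ M (dyQ γ M n (j+1)) - vv γ M (dyQ γ M (n+1) (2*j+1))
          ≤ uu γ M (dyQ γ M n (j+1)) - dyQ γ M (n+1) (2*j+1) := by linarith
        _ = (uu γ M (dyQ γ M n (j+1)) - vv γ M (dyQ γ M n j))/2 := by rw [hz]; ring
        _ ≤ (1/2)^(n+1) := by rw [pow_succ]; linarith

/-- Density: between two distinct class boundaries there is a dyadic class. -/
lemma dyQ_dense (h : Good γ M) (hγ : Continuous γ) (hne : γ 0 ≠ γ 1)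
    {s t : ℝ} (hs : s ∈ Icc (0:ℝ) 1) (ht : t ∈ Icc (0:ℝ) 1)
    (hvs : vv γ M s = s) (hut : uu γ M t = t) (hst : s < t) :
    ∃ n k, k ≤ 2^n ∧ s < uu γ M (dyQ γ M n k) ∧ vv γ M (dyQ γ M n k) < t := by
  set z := (s + t)/2 with hzdef
  have hz1 : s < z := by rw [hzdef]; linarith
  have hz2 : z < t := by rw [hzdef]; linarith
  have hzmem : z ∈ Icc (0:ℝ) 1 := ⟨le_trans hs.1 hz1.le, le_trans hz2.le ht.2⟩
  obtain ⟨n, hn⟩ : ∃ n : ℕ, ((1:ℝ)/2)^n < (t - s)/2 :=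
    exists_pow_lt_of_lt_one (by linarith) (by norm_num : (1:ℝ)/2 < 1)
  set A := {k : ℕ | k ≤ 2^n ∧ uu γ M (dyQ γ M n k) ≤ z} with hA
  have hA0 : 0 ∈ A := by
    refine ⟨Nat.zero_le _, ?_⟩
    rw [(dyQ_props h hγ hne n).1]
    exact le_trans (uu_le h hγ ⟨le_refl 0, zero_le_one⟩) (hzmem.1)
  have hAbdd : BddAbove A := ⟨2^n, fun k hk => hk.1⟩
  set k₀ := sSup A with hk₀def
  have hk₀ : k₀ ∈ A := Nat.sSup_mem ⟨0, hA0⟩ hAbdd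
  have hQmem : dyQ γ M n k₀ ∈ Icc (0:ℝ) 1 := (dyQ_props h hγ hne n).2.2.1 k₀ hk₀.1
  by_cases hzv : z ≤ vv γ M (dyQ γ M n k₀)
  · -- z in the class of Q n k₀
    refine ⟨n, k₀, hk₀.1, ?_, ?_⟩
    · by_contra hc
      push_neg at hc
      have hscls : dd γ M s = dd γ M (dyQ γ M n k₀) :=
        dd_mem_cls h hγ hQmem ⟨hc, le_trans hz1.le hzv⟩
      have h2 : s = vv γ M (dyQ γ M n k₀) := by
        have := vv_congr hscls; rwa [hvs] at this
      rw [← h2] at hzv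
      linarith
    · by_contra hc
      push_neg at hc
      have htcls : dd γ M t = dd γ M (dyQ γ M n k₀) :=
        dd_mem_cls h hγ hQmem ⟨le_trans hk₀.2 hz2.le, hc⟩
      have h2 : t = uu γ M (dyQ γ M n k₀) := by
        have := uu_congr htcls; rwa [hut] at this
      have h3 : uu γ M (dyQ γ M n k₀) ≤ z := hk₀.2
      rw [← h2] at h3
      linarith
  · push_neg at hzv
    have hk₀lt : k₀ < 2^n := by
      rcases Nat.lt_or_ge k₀ (2^n) with hlt | hge
      · exact hlt
      · exfalso
        have : k₀ = 2^n := le_antisymm hk₀.1 hge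
        rw [this, (dyQ_props h hγ hne n).2.1] at hzv
        have : z ≤ vv γ M 1 := le_trans (le_trans hz2.le ht.2) (le_vv h hγ ⟨zero_le_one, le_refl 1⟩)
        linarith
    have hnot : ¬ (k₀ + 1 ∈ A) := fun hmem => by
      have := le_csSup hAbdd hmem
      omega
    have huk1 : z < uu γ M (dyQ γ M n (k₀+1)) := by
      by_contra hc
      push_neg at hc
      exact hnot ⟨hk₀lt, hc⟩
    have hslot := dyQ_slot h hγ hne n k₀ hk₀lt
    refine ⟨n, k₀, hk₀.1, ?_, lt_trans hzv hz2⟩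
    -- s < uu (Q n k₀)
    have hvQ : s < vv γ M (dyQ γ M n k₀) := by
      have : uu γ M (dyQ γ M n (k₀+1)) - vv γ M (dyQ γ M n k₀) < (t-s)/2 :=
        lt_of_le_of_lt hslot hn
      have hz3 : z - s = (t-s)/2 := by rw [hzdef]; ring
      linarith
    by_contra hc
    push_neg at hc
    have hscls : dd γ M s = dd γ M (dyQ γ M n k₀) :=
      dd_mem_cls h hγ hQmem ⟨hc, hvQ.le⟩
    have h2 : s = vv γ M (dyQ γ M n k₀) := by
      have := vv_congr hscls; rwa [hvs] at this
    rw [← h2] at hvQ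
    linarith

noncomputable def psiD (γ : ℝ → X) (M : Set ℝ) (x : ℝ) : Set ℝ :=
  insert 0 {d | ∃ n k : ℕ, k ≤ 2^n ∧ vv γ M (dyQ γ M n k) ≤ x ∧ d = (k:ℝ)/2^n}

noncomputable def psi (γ : ℝ → X) (M : Set ℝ) (x : ℝ) : ℝ := sSup (psiD γ M x)

lemma psiD_bdd (x : ℝ) : BddAbove (psiD γ M x) := by
  refine ⟨1, ?_⟩
  rintro d (rfl | ⟨n, k, hk, hv, rfl⟩)
  · exact zero_le_one
  · rw [div_le_one (by positivity)]
    exact_mod_cast Nat.cast_le.2 hk |>.trans (le_of_eq (by push_cast; ring))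

lemma psiD_nonempty (x : ℝ) : (psiD γ M x).Nonempty := ⟨0, mem_insert _ _⟩

lemma psi_nonneg (x : ℝ) : 0 ≤ psi γ M x := le_csSup (psiD_bdd x) (mem_insert _ _)

lemma psi_le_one (x : ℝ) : psi γ M x ≤ 1 := by
  apply csSup_le (psiD_nonempty x)
  rintro d (rfl | ⟨n, k, hk, hv, rfl⟩)
  · exact zero_le_one
  · rw [div_le_one (by positivity)]
    calc (k:ℝ) ≤ (2^n : ℕ) := Nat.cast_le.2 hk
      _ = (2:ℝ)^n := by push_cast; ring

lemma psi_mono {x y : ℝ} (hxy : x ≤ y) : psi γ M x ≤ psi γ M y := by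
  apply csSup_le_csSup (psiD_bdd y) (psiD_nonempty x)
  rintro d (rfl | ⟨n, k, hk, hv, rfl⟩)
  · exact mem_insert _ _
  · exact Or.inr ⟨n, k, hk, hv.trans hxy, rfl⟩

lemma psi_vQ (h : Good γ M) (hγ : Continuous γ) (hne : γ 0 ≠ γ 1)
    {n k : ℕ} (hk : k ≤ 2^n) : psi γ M (vv γ M (dyQ γ M n k)) = (k:ℝ)/2^n := by
  apply le_antisymm
  · apply csSup_le (psiD_nonempty _)
    rintro d (rfl | ⟨m, j, hj, hv, rfl⟩)
    · positivity
    · by_contra hc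
      push_neg at hc
      have := dyQ_lt h hγ hne hk hj hc
      have hQm := (dyQ_props h hγ hne m).2.2.1 j hj
      linarith [((uu_le h hγ hQm).trans (le_vv h hγ hQm)), hv]
  · exact le_csSup (psiD_bdd _) (Or.inr ⟨n, k, hk, le_refl _, rfl⟩)

lemma psi_const (h : Good γ M) (hγ : Continuous γ) (hne : γ 0 ≠ γ 1)
    {x y : ℝ} (hx : x ∈ Icc (0:ℝ) 1) (hy : y ∈ Icc (0:ℝ) 1)
    (he : dd γ M x = dd γ M y) : psi γ M x = psi γ M y := by
  -- WLOG x ≤ y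
  wlog hxy : x ≤ y generalizing x y
  · exact (this hy hx he.symm (le_of_not_ge hxy)).symm
  refine le_antisymm (psi_mono hxy) ?_
  apply csSup_le (psiD_nonempty _)
  rintro d (rfl | ⟨n, k, hk, hv, rfl⟩)
  · exact psi_nonneg x
  rcases le_or_gt (vv γ M (dyQ γ M n k)) x with hvx | hvx
  · exact le_csSup (psiD_bdd _) (Or.inr ⟨n, k, hk, hvx, rfl⟩)
  -- x < vv (Q n k) ≤ y : same class as x
  rcases Nat.eq_zero_or_pos k with rfl | hkpos
  · simpa using psi_nonneg (γ := γ) (M := M) x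
  have hQmem : dyQ γ M n k ∈ Icc (0:ℝ) 1 := (dyQ_props h hγ hne n).2.2.1 k hk
  have hvQmem : vv γ M (dyQ γ M n k) ∈ Icc (0:ℝ) 1 := vv_mem_Icc h hγ hQmem
  have hcls : dd γ M (vv γ M (dyQ γ M n k)) = dd γ M x := by
    have hvvy : vv γ M x = vv γ M y := vv_congr he
    apply dd_mem_cls h hγ hx
    refine ⟨(uu_le h hγ hx).trans hvx.le, ?_⟩
    rw [hvvy]
    exact hv.trans (le_vv h hγ hy)
  have huEq : uu γ M (dyQ γ M n k) = uu γ M x := by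
    apply uu_congr
    rw [← dd_vv h hγ hQmem]
    exact hcls
  -- ψ x ≥ k/2^n - (1/2)^(n+i) for all i
  have hlb : ∀ i : ℕ, (k:ℝ)/2^n - (1/2)^(n+i) ≤ psi γ M x := by
    intro i
    set j := k * 2^i - 1 with hj
    have hj1 : 1 ≤ k * 2^i := Nat.one_le_iff_ne_zero.2 (by positivity)
    have hjval : (j:ℝ)/2^(n+i) = (k:ℝ)/2^n - (1/2)^(n+i) := by
      rw [hj]
      push_cast [Nat.cast_sub hj1]
      rw [pow_add]
      field_simp
      have e1 : ((1:ℝ)/2)^i * 2^i = 1 := by rw [← mul_pow]; norm_num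
      have e2 : ((1:ℝ)/2)^n * 2^n = 1 := by rw [← mul_pow]; norm_num
      linear_combination ((1/2:ℝ)^n * 2^n) * e1 + e2
    have hjle : j ≤ 2^(n+i) := by
      rw [hj, pow_add]
      calc k * 2^i - 1 ≤ k * 2^i := Nat.sub_le _ _
        _ ≤ 2^n * 2^i := Nat.mul_le_mul_right _ hk
    have hjlt : (j:ℝ)/2^(n+i) < (k:ℝ)/2^n := by
      rw [hjval]
      have : (0:ℝ) < (1/2)^(n+i) := by positivity
      linarith
    have := dyQ_lt h hγ hne hjle hk hjlt
    have hvj : vv γ M (dyQ γ M (n+i) j) ≤ x := by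
      rw [huEq] at this
      exact this.le.trans (uu_le h hγ hx)
    rw [← hjval]
    exact le_csSup (psiD_bdd _) (Or.inr ⟨n+i, j, hjle, hvj, rfl⟩)
  -- conclude
  have hlim : Tendsto (fun i : ℕ => (k:ℝ)/2^n - (1/2)^(n+i)) atTop (nhds ((k:ℝ)/2^n)) := by
    have h2 : Tendsto (fun i : ℕ => ((1:ℝ)/2)^(n+i)) atTop (nhds 0) := by
      have hbase := tendsto_pow_atTop_nhds_zero_of_lt_one (by norm_num : (0:ℝ) ≤ 1/2) (by norm_num : (1:ℝ)/2 < 1)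
      have := hbase.comp (tendsto_add_atTop_nat n)
      have heq : (fun i : ℕ => ((1:ℝ)/2)^(n+i)) = (fun i : ℕ => ((1:ℝ)/2)^i) ∘ (fun a => a + n) := by
        funext i; simp [Nat.add_comm]
      rw [heq]
      exact this
    simpa using tendsto_const_nhds.sub h2
  exact le_of_tendsto' hlim hlb

lemma psi_lt (h : Good γ M) (hγ : Continuous γ) (hne : γ 0 ≠ γ 1)
    {x y : ℝ} (hx : x ∈ Icc (0:ℝ) 1) (hy : y ∈ Icc (0:ℝ) 1)
    (hxy : x < y) (hdd : dd γ M x ≠ dd γ M y) : psi γ M x < psi γ M y := by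
  have hsep := cls_sep h hγ hx hy hxy hdd
  have hvx := vv_mem_Icc h hγ hx
  have huy := uu_mem_Icc h hγ hy
  obtain ⟨n, k, hk, hk1, hk2⟩ := dyQ_dense h hγ hne hvx huy
    (vv_idem h hγ hx) (uu_idem h hγ hy) hsep
  have hQmem : dyQ γ M n k ∈ Icc (0:ℝ) 1 := (dyQ_props h hγ hne n).2.2.1 k hk
  have hvQ := vv_mem_Icc h hγ hQmem
  obtain ⟨m, j, hj, hj1, hj2⟩ := dyQ_dense h hγ hne hvQ huy
    (vv_idem h hγ hQmem) (uu_idem h hγ hy) (by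
      calc vv γ M (dyQ γ M n k) < uu γ M y := hk2)
  have hQmem' : dyQ γ M m j ∈ Icc (0:ℝ) 1 := (dyQ_props h hγ hne m).2.2.1 j hj
  -- k/2^n < j/2^m
  have hQlt : (k:ℝ)/2^n < (j:ℝ)/2^m := by
    rcases lt_trichotomy ((k:ℝ)/2^n) ((j:ℝ)/2^m) with hlt | heq | hgt
    · exact hlt
    · exfalso
      have := dyQ_eq (γ := γ) (M := M) heq
      rw [this] at hj1
      linarith [(uu_le h hγ hQmem').trans (le_vv h hγ hQmem')]
    · exfalso
      have := dyQ_lt h hγ hne hj hk hgt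
      linarith [(uu_le h hγ hQmem).trans (le_vv h hγ hQmem),
        (uu_le h hγ hQmem').trans (le_vv h hγ hQmem')]
  have hpx : psi γ M x ≤ (k:ℝ)/2^n := by
    apply csSup_le (psiD_nonempty _)
    rintro d (rfl | ⟨m', j', hj', hv', rfl⟩)
    · positivity
    · by_contra hc
      push_neg at hc
      have := dyQ_lt h hγ hne hk hj' hc
      have hQm' : dyQ γ M m' j' ∈ Icc (0:ℝ) 1 := (dyQ_props h hγ hne m').2.2.1 j' hj'
      have hx_le : x ≤ vv γ M x := le_vv h hγ hx
      linarith [(uu_le h hγ hQm').trans (le_vv h hγ hQm'), hv',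
        (uu_le h hγ hQmem).trans (le_vv h hγ hQmem)]
  have hpy : (j:ℝ)/2^m ≤ psi γ M y := by
    apply le_csSup (psiD_bdd _)
    exact Or.inr ⟨m, j, hj, (hj2.le).trans (uu_le h hγ hy), rfl⟩
  linarith

lemma psi_zero (h : Good γ M) (hγ : Continuous γ) (hne : γ 0 ≠ γ 1) : psi γ M 0 = 0 := by
  have h0 : (0:ℝ) ∈ Icc (0:ℝ) 1 := ⟨le_refl 0, zero_le_one⟩
  have e0 : dyQ γ M 0 0 = 0 := by simp [dyQ]
  have := psi_vQ h hγ hne (n := 0) (k := 0) (by norm_num)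
  rw [e0] at this
  have hc : psi γ M 0 = psi γ M (vv γ M 0) :=
    psi_const h hγ hne h0 (vv_mem_Icc h hγ h0) (dd_vv h hγ h0).symm
  rw [hc, this]
  norm_num

lemma psi_one (h : Good γ M) (hγ : Continuous γ) (hne : γ 0 ≠ γ 1) : psi γ M 1 = 1 := by
  have h1 : (1:ℝ) ∈ Icc (0:ℝ) 1 := ⟨zero_le_one, le_refl 1⟩
  have e1 : dyQ γ M 0 1 = 1 := by simp [dyQ]
  have := psi_vQ h hγ hne (n := 0) (k := 1) (by norm_num)
  rw [e1] at this
  have hc : psi γ M 1 = psi γ M (vv γ M 1) :=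
    psi_const h hγ hne h1 (vv_mem_Icc h hγ h1) (dd_vv h hγ h1).symm
  rw [hc, this]
  norm_num

noncomputable def clamp (t : ℝ) : ℝ := max 0 (min 1 t)

lemma clamp_mem (t : ℝ) : clamp t ∈ Icc (0:ℝ) 1 :=
  ⟨le_max_left _ _, max_le (zero_le_one) (min_le_left _ _)⟩

lemma clamp_of_mem {t : ℝ} (ht : t ∈ Icc (0:ℝ) 1) : clamp t = t := by
  rw [clamp, min_eq_right ht.2, max_eq_right ht.1]

lemma clamp_mono : Monotone clamp := fun a b hab =>
  max_le_max (le_refl 0) (min_le_min (le_refl 1) hab)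

lemma clamp_continuous : Continuous clamp :=
  continuous_const.max (continuous_const.min continuous_id)

noncomputable def Psi (γ : ℝ → X) (M : Set ℝ) (x : ℝ) : ℝ :=
  psi γ M (clamp x) + max 0 (x - 1) + min 0 x

lemma Psi_eq_psi {x : ℝ} (hx : x ∈ Icc (0:ℝ) 1) : Psi γ M x = psi γ M x := by
  rw [Psi, clamp_of_mem hx, max_eq_left (by linarith [hx.2]), min_eq_left hx.1]
  ring

lemma Psi_mono : Monotone (Psi γ M) := by
  intro a b hab
  unfold Psi
  have h1 : psi γ M (clamp a) ≤ psi γ M (clamp b) := psi_mono (clamp_mono hab)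
  have h2 : max 0 (a-1) ≤ max 0 (b-1) := max_le_max (le_refl 0) (by linarith)
  have h3 : min 0 a ≤ min 0 b := min_le_min (le_refl 0) hab
  linarith

lemma Psi_low (h : Good γ M) (hγ : Continuous γ) (hne : γ 0 ≠ γ 1) {x : ℝ} (hx : x ≤ 0) :
    Psi γ M x = x := by
  rw [Psi, show clamp x = 0 by rw [clamp, min_eq_right (by linarith), max_eq_left hx],
    psi_zero h hγ hne, max_eq_left (by linarith), min_eq_right hx]
  ring

lemma Psi_high (h : Good γ M) (hγ : Continuous γ) (hne : γ 0 ≠ γ 1) {x : ℝ} (hx : 1 ≤ x) :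
    Psi γ M x = x := by
  rw [Psi, show clamp x = 1 by rw [clamp, min_eq_left hx, max_eq_right zero_le_one],
    psi_one h hγ hne, max_eq_right (by linarith), min_eq_left (by linarith)]
  ring

lemma Psi_denseRange (h : Good γ M) (hγ : Continuous γ) (hne : γ 0 ≠ γ 1) :
    DenseRange (Psi γ M) := by
  intro z
  rw [Metric.mem_closure_iff]
  intro ε hε
  rcases le_or_gt z 0 with hz | hz
  · exact ⟨z, ⟨z, Psi_low h hγ hne hz⟩, by simpa using hε⟩
  rcases le_or_gt 1 z with hz1 | hz1
  · exact ⟨z, ⟨z, Psi_high h hγ hne hz1⟩, by simpa using hε⟩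
  obtain ⟨n, hn⟩ : ∃ n : ℕ, ((1:ℝ)/2)^n < ε :=
    exists_pow_lt_of_lt_one hε (by norm_num)
  set k := ⌊z * 2^n⌋₊ with hk
  have h2n : (0:ℝ) < 2^n := by positivity
  have hk1 : (k:ℝ) ≤ z * 2^n := Nat.floor_le (by positivity)
  have hk2 : z * 2^n < (k:ℝ) + 1 := Nat.lt_floor_add_one _
  have hkle : k ≤ 2^n := by
    have h1 : (k:ℝ) ≤ ((2^n : ℕ) : ℝ) := by
      push_cast
      nlinarith
    exact_mod_cast h1
  refine ⟨(k:ℝ)/2^n, ⟨vv γ M (dyQ γ M n k), ?_⟩, ?_⟩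
  · have hQmem : dyQ γ M n k ∈ Icc (0:ℝ) 1 := (dyQ_props h hγ hne n).2.2.1 k hkle
    rw [Psi_eq_psi (vv_mem_Icc h hγ hQmem)]
    exact psi_vQ h hγ hne hkle
  · rw [Real.dist_eq, abs_lt]
    constructor
    · have : (k:ℝ)/2^n ≤ z := by rw [div_le_iff₀ h2n]; linarith
      linarith
    · have hlt : z - (k:ℝ)/2^n < 1/2^n := by
        have : z < ((k:ℝ) + 1)/2^n := by rw [lt_div_iff₀ h2n]; linarith
        have e : ((k:ℝ) + 1)/2^n = (k:ℝ)/2^n + 1/2^n := by ring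
        linarith [e ▸ this]
      calc z - (k:ℝ)/2^n < 1/2^n := hlt
        _ = (1/2)^n := by rw [div_pow, one_pow]
        _ < ε := hn

lemma Psi_continuous (h : Good γ M) (hγ : Continuous γ) (hne : γ 0 ≠ γ 1) :
    Continuous (Psi γ M) :=
  Psi_mono.continuous_of_denseRange (Psi_denseRange h hγ hne)

/-- **The arc theorem**: a continuous path with distinct endpoints contains an arc. -/
theorem exists_arc (γ : ℝ → X) (hγ : Continuous γ) (hne : γ 0 ≠ γ 1) :
    ∃ f : ℝ → X, Continuous f ∧ InjOn f (Icc 0 1) ∧ f 0 = γ 0 ∧ f 1 = γ 1 ∧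
      f '' Icc 0 1 ⊆ γ '' Icc 0 1 := by
  obtain ⟨M, h⟩ := exists_min_M γ hγ
  have hne' : dd γ M 0 ≠ dd γ M 1 := by
    rw [dd_def, dd_def, rr_eq h h.mem0, rr_eq h h.mem1]; exact hne
  have hγ01 : γ 0 ≠ γ 1 := hne
  -- the monotone quotient map on the unit interval
  set I := Icc (0:ℝ) 1 with hI
  have h0I : (0:ℝ) ∈ I := ⟨le_refl 0, zero_le_one⟩
  have h1I : (1:ℝ) ∈ I := ⟨zero_le_one, le_refl 1⟩
  have hPsimem : ∀ a : I, Psi γ M (a:ℝ) ∈ I := by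
    rintro ⟨a, ha⟩
    constructor
    · have := Psi_mono (γ := γ) (M := M) ha.1
      rwa [Psi_low h hγ hγ01 (le_refl 0)] at this
    · have := Psi_mono (γ := γ) (M := M) ha.2
      rwa [Psi_high h hγ hγ01 (le_refl 1)] at this
  set F : I → I := fun a => ⟨Psi γ M (a:ℝ), hPsimem a⟩ with hF
  have hFcont : Continuous F :=
    Continuous.subtype_mk ((Psi_continuous h hγ hγ01).comp continuous_subtype_val) _
  have hFsurj : Function.Surjective F := by
    rintro ⟨y, hy⟩
    have hPsi0 : Psi γ M 0 = 0 := Psi_low h hγ hγ01 (le_refl 0)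
    have hPsi1 : Psi γ M 1 = 1 := Psi_high h hγ hγ01 (le_refl 1)
    have : y ∈ Icc (Psi γ M 0) (Psi γ M 1) := by rw [hPsi0, hPsi1]; exact hy
    obtain ⟨x, hx, hxy⟩ := intermediate_value_Icc zero_le_one
      ((Psi_continuous h hγ hγ01).continuousOn) this
    exact ⟨⟨x, hx⟩, Subtype.ext hxy⟩
  set G : I → X := fun a => dd γ M (a:ℝ) with hG
  have hGcont : Continuous G := ContinuousOn.restrict (dd_cont h hγ)
  have hkey : ∀ a b : I, F a = F b → G a = G b := by
    rintro ⟨a, ha⟩ ⟨b, hb⟩ hab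
    have hab' : Psi γ M a = Psi γ M b := congrArg Subtype.val hab
    by_contra hG'
    have hddne : dd γ M a ≠ dd γ M b := hG'
    rcases lt_trichotomy a b with hlt | heq | hgt
    · have := psi_lt h hγ hγ01 ha hb hlt hddne
      rw [← Psi_eq_psi ha, ← Psi_eq_psi hb] at this
      linarith
    · subst heq; exact hG' rfl
    · have := psi_lt h hγ hγ01 hb ha hgt hddne.symm
      rw [← Psi_eq_psi ha, ← Psi_eq_psi hb] at this
      linarith
  have hFquot : IsQuotientMap F :=
    (hFcont.isClosedMap).isQuotientMap hFcont hFsurj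
  set eps : I → X := G ∘ Function.surjInv hFsurj with heps
  have heps_comp : ∀ a : I, eps (F a) = G a := by
    intro a
    exact hkey _ _ (Function.surjInv_eq hFsurj (F a))
  have hepsF : eps ∘ F = G := funext heps_comp
  have hepscont : Continuous eps := by
    rw [hFquot.continuous_iff, hepsF]
    exact hGcont
  have hepsinj : Function.Injective eps := by
    intro y1 y2 hy
    have hdd : dd γ M ((Function.surjInv hFsurj y1 : I) : ℝ)
        = dd γ M ((Function.surjInv hFsurj y2 : I) : ℝ) := hy
    have hpsi := psi_const h hγ hγ01 (Function.surjInv hFsurj y1).2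
      (Function.surjInv hFsurj y2).2 hdd
    have hFeq : F (Function.surjInv hFsurj y1) = F (Function.surjInv hFsurj y2) :=
      Subtype.ext (by
        show Psi γ M _ = Psi γ M _
        rw [Psi_eq_psi (Function.surjInv hFsurj y1).2,
          Psi_eq_psi (Function.surjInv hFsurj y2).2]
        exact hpsi)
    calc y1 = F (Function.surjInv hFsurj y1) := (Function.surjInv_eq hFsurj y1).symm
      _ = F (Function.surjInv hFsurj y2) := hFeq
      _ = y2 := Function.surjInv_eq hFsurj y2
  -- final arc
  refine ⟨fun t => eps ⟨clamp t, clamp_mem t⟩, ?_, ?_, ?_, ?_, ?_⟩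
  · exact hepscont.comp (Continuous.subtype_mk clamp_continuous _)
  · intro a ha b hb hab
    have h2 : clamp a = clamp b := congrArg Subtype.val (hepsinj hab)
    rwa [clamp_of_mem ha, clamp_of_mem hb] at h2
  · have hc0 : (⟨clamp 0, clamp_mem 0⟩ : I) = ⟨0, h0I⟩ := Subtype.ext (clamp_of_mem h0I)
    have hF0 : F ⟨0, h0I⟩ = ⟨0, h0I⟩ := Subtype.ext (Psi_low h hγ hγ01 (le_refl 0))
    have e3 : eps ⟨clamp 0, clamp_mem 0⟩ = eps (F ⟨0, h0I⟩) :=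
      congrArg eps (hc0.trans hF0.symm)
    show eps ⟨clamp 0, clamp_mem 0⟩ = γ 0
    rw [e3, heps_comp]
    show dd γ M 0 = γ 0
    rw [dd_def, rr_eq h h.mem0]
  · have hc1 : (⟨clamp 1, clamp_mem 1⟩ : I) = ⟨1, h1I⟩ := Subtype.ext (clamp_of_mem h1I)
    have hF1 : F ⟨1, h1I⟩ = ⟨1, h1I⟩ := Subtype.ext (Psi_high h hγ hγ01 (le_refl 1))
    have e3 : eps ⟨clamp 1, clamp_mem 1⟩ = eps (F ⟨1, h1I⟩) :=
      congrArg eps (hc1.trans hF1.symm)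
    show eps ⟨clamp 1, clamp_mem 1⟩ = γ 1
    rw [e3, heps_comp]
    show dd γ M 1 = γ 1
    rw [dd_def, rr_eq h h.mem1]
  · rintro x ⟨t, ht, rfl⟩
    set a := Function.surjInv hFsurj ⟨clamp t, clamp_mem t⟩ with haa
    show eps ⟨clamp t, clamp_mem t⟩ ∈ γ '' Icc 0 1
    have : eps ⟨clamp t, clamp_mem t⟩ = dd γ M (a:ℝ) := rfl
    rw [this, dd_def]
    exact ⟨rr M (a:ℝ), h.sub (rr_mem h a.2.1).1, rfl⟩


end SCC


open Set Topology

/-- A connected, locally path-connected, compact metric space with more than one point and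
no cut points contains a simple closed curve. -/
theorem stmt16 {X : Type} [MetricSpace X] [CompactSpace X] [ConnectedSpace X]
    [LocallyPathConnectedSpace X] [Nontrivial X]
    (hnocut : ∀ x : X, IsConnected ({x}ᶜ : Set X)) :
    ∃ e : Circle → X, Topology.IsEmbedding e := by
  classical
  obtain ⟨a, b, hab⟩ := exists_pair_ne X
  haveI : PathConnectedSpace X := pathConnectedSpace_iff_connectedSpace.2 ‹_›
  set γ₀ : Path a b := (PathConnectedSpace.joined a b).somePath with hγ₀
  have hγc : Continuous γ₀.extend := γ₀.continuous_extend
  have hγ0 : γ₀.extend 0 = a := γ₀.extend_zero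
  have hγ1 : γ₀.extend 1 = b := γ₀.extend_one
  obtain ⟨α, hαc, hαinj, hα0, hα1, hαimg⟩ :=
    SCC.exists_arc γ₀.extend hγc (by rw [hγ0, hγ1]; exact hab)
  rw [hγ0] at hα0
  rw [hγ1] at hα1
  have half_mem : (1/2 : ℝ) ∈ Icc (0:ℝ) 1 := by norm_num
  have h0mem : (0:ℝ) ∈ Icc (0:ℝ) 1 := by norm_num
  have h1mem : (1:ℝ) ∈ Icc (0:ℝ) 1 := by norm_num
  set p := α (1/2) with hp
  have hpa : p ≠ a := by
    rw [← hα0]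
    intro hc
    have := hαinj half_mem h0mem hc
    norm_num at this
  have hpb : p ≠ b := by
    rw [← hα1]
    intro hc
    have := hαinj half_mem h1mem hc
    norm_num at this
  -- path from a to b avoiding p
  have hpath : IsPathConnected ({p}ᶜ : Set X) :=
    (isOpen_compl_singleton).isConnected_iff_isPathConnected.1 (hnocut p)
  have hjoin : JoinedIn ({p}ᶜ : Set X) a b :=
    hpath.joinedIn a (by simpa using hpa.symm) b (by simpa using hpb.symm)
  set β₀ := hjoin.somePath with hβ₀
  set β := β₀.extend with hβ
  have hβc : Continuous β := β₀.continuous_extend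
  have hβ0 : β 0 = a := β₀.extend_zero
  have hβ1 : β 1 = b := β₀.extend_one
  have hβne : ∀ t ∈ Icc (0:ℝ) 1, β t ≠ p := by
    intro t ht
    rw [hβ, β₀.extend_apply ht]
    exact hjoin.somePath_mem _
  -- first exit / last entry
  set A1 := α '' Icc 0 (1/2) with hA1
  set A2 := α '' Icc (1/2) 1 with hA2
  have hA1closed : IsClosed A1 := ((isCompact_Icc).image hαc).isClosed
  have hA2closed : IsClosed A2 := ((isCompact_Icc).image hαc).isClosed
  set T := Icc (0:ℝ) 1 ∩ β ⁻¹' A1 with hT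
  have hTclosed : IsClosed T := isClosed_Icc.inter (hA1closed.preimage hβc)
  have hTcpt : IsCompact T := isCompact_Icc.of_isClosed_subset hTclosed inter_subset_left
  have h0T : (0:ℝ) ∈ T := by
    refine ⟨h0mem, ?_⟩
    show β 0 ∈ A1
    rw [hβ0, ← hα0]
    exact ⟨0, ⟨le_refl 0, by norm_num⟩, rfl⟩
  set u := sSup T with hu
  have huT : u ∈ T := hTcpt.sSup_mem ⟨0, h0T⟩
  obtain ⟨c, hc, hcu⟩ : ∃ c ∈ Icc (0:ℝ) (1/2), α c = β u := huT.2
  have hcmem : c ∈ Icc (0:ℝ) 1 := ⟨hc.1, hc.2.trans (by norm_num)⟩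
  have hclt : c < 1/2 := by
    rcases lt_or_eq_of_le hc.2 with h | h
    · exact h
    · exfalso
      apply hβne u huT.1
      rw [← hcu, h]
  set T' := Icc u 1 ∩ β ⁻¹' A2 with hT'
  have hT'closed : IsClosed T' := isClosed_Icc.inter (hA2closed.preimage hβc)
  have hT'cpt : IsCompact T' := (isCompact_Icc (a := u) (b := 1)).of_isClosed_subset hT'closed inter_subset_left
  have h1T' : (1:ℝ) ∈ T' := by
    refine ⟨⟨huT.1.2, le_refl 1⟩, ?_⟩
    show β 1 ∈ A2
    rw [hβ1, ← hα1]
    exact ⟨1, ⟨by norm_num, le_refl 1⟩, rfl⟩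
  set v := sInf T' with hv
  have hvT' : v ∈ T' := hT'cpt.sInf_mem ⟨1, h1T'⟩
  obtain ⟨d, hd, hdv⟩ : ∃ d ∈ Icc (1/2:ℝ) 1, α d = β v := hvT'.2
  have hdmem : d ∈ Icc (0:ℝ) 1 := ⟨le_trans (by norm_num) hd.1, hd.2⟩
  have hvmem : v ∈ Icc (0:ℝ) 1 := ⟨huT.1.1.trans hvT'.1.1, hvT'.1.2⟩
  have hdgt : 1/2 < d := by
    rcases lt_or_eq_of_le hd.1 with h | h
    · exact h
    · exfalso
      apply hβne v hvmem
      rw [← hdv, ← h]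
  have hcd : c ≠ d := fun hc' => by rw [hc'] at hclt; linarith
  have hαcd : α c ≠ α d := fun hc' => hcd (hαinj hcmem hdmem hc')
  have huv : u < v := by
    rcases lt_or_eq_of_le hvT'.1.1 with h | h
    · exact h
    · exfalso
      apply hαcd
      rw [hcu, hdv, h]
  -- interior of β between u and v avoids the arc
  have hmid : ∀ t ∈ Ioo u v, β t ∉ α '' Icc 0 1 := by
    rintro t ht ⟨s, hs, hst⟩
    have htmem : t ∈ Icc (0:ℝ) 1 := ⟨huT.1.1.trans ht.1.le, ht.2.le.trans hvmem.2⟩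
    rcases le_total s (1/2) with hs2 | hs2
    · have : t ∈ T := ⟨htmem, ⟨s, ⟨hs.1, hs2⟩, hst⟩⟩
      have := le_csSup hTcpt.bddAbove this
      exact absurd ht.1 (not_lt.2 this)
    · have : t ∈ T' := ⟨⟨ht.1.le, htmem.2⟩, ⟨s, ⟨hs2, hs.2⟩, hst⟩⟩
      have := csInf_le hT'cpt.bddBelow this
      exact absurd ht.2 (not_lt.2 this)
  -- second arc inside β '' [u,v]
  set γ₂ : ℝ → X := fun s => β (u + s * (v - u)) with hγ₂
  have hγ₂c : Continuous γ₂ :=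
    hβc.comp (continuous_const.add (continuous_id.mul continuous_const))
  have hγ₂0 : γ₂ 0 = α c := by rw [hγ₂]; simp [hcu]
  have hγ₂1 : γ₂ 1 = α d := by
    rw [hγ₂]
    simp only [one_mul]
    rw [show u + (v - u) = v by ring, hdv]
  obtain ⟨g, hgc, hginj, hg0, hg1, hgimg⟩ := SCC.exists_arc γ₂ hγ₂c
    (by rw [hγ₂0, hγ₂1]; exact hαcd)
  rw [hγ₂0] at hg0
  rw [hγ₂1] at hg1
  have hgβ : g '' Icc 0 1 ⊆ β '' Icc u v := by
    refine hgimg.trans ?_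
    rintro x ⟨s, hs, rfl⟩
    refine ⟨u + s * (v - u), ⟨by nlinarith [hs.1, hs.2], by nlinarith [hs.1, hs.2]⟩, rfl⟩
  -- first arc piece from c to d
  set h₁ : ℝ → X := fun s => α (c + s * (d - c)) with hh₁
  have hh₁c : Continuous h₁ :=
    hαc.comp (continuous_const.add (continuous_id.mul continuous_const))
  have hh₁0 : h₁ 0 = α c := by rw [hh₁]; simp
  have hh₁1 : h₁ 1 = α d := by
    rw [hh₁]; simp only [one_mul]; rw [show c + (d - c) = d by ring]
  have haffmem : ∀ s ∈ Icc (0:ℝ) 1, c + s * (d - c) ∈ Icc (0:ℝ) 1 := by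
    intro s hs
    constructor
    · nlinarith [hs.1, hs.2, hcmem.1, hclt, hdgt]
    · nlinarith [hs.1, hs.2, hdmem.2, hclt, hdgt]
  have hh₁inj : InjOn h₁ (Icc 0 1) := by
    intro s hs t ht hst
    have := hαinj (haffmem s hs) (haffmem t ht) hst
    have hdc : d - c > 0 := by linarith
    nlinarith [this]
  have hh₁img : h₁ '' Icc 0 1 ⊆ α '' Icc 0 1 := by
    rintro x ⟨s, hs, rfl⟩
    exact ⟨c + s * (d - c), haffmem s hs, rfl⟩
  -- mixed intersection
  have hmix : ∀ x, x ∈ h₁ '' Icc 0 1 → x ∈ g '' Icc 0 1 → x = α c ∨ x = α d := by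
    rintro x hx hg'
    obtain ⟨t, htuv, htx⟩ := hgβ hg'
    rcases lt_or_eq_of_le htuv.1 with h1 | h1
    · rcases lt_or_eq_of_le htuv.2 with h2 | h2
      · exfalso
        exact hmid t ⟨h1, h2⟩ (htx ▸ hh₁img hx)
      · right; rw [← htx, h2, ← hdv]
    · left; rw [← htx, ← h1, ← hcu]
  -- the loop
  set F : ℝ → X := fun t => if t ≤ 1/2 then h₁ (2*t) else g (2 - 2*t) with hF
  have hFc : Continuous F := by
    apply Continuous.if_le
      (hh₁c.comp (continuous_const.mul continuous_id))
      (hgc.comp (continuous_const.sub (continuous_const.mul continuous_id)))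
      continuous_id continuous_const
    intro x hx
    simp only [id_eq] at hx
    subst hx
    show h₁ (2 * id (1/2)) = g (2 - 2 * id (1/2))
    rw [show (2:ℝ) * id (1/2) = 1 by norm_num]
    rw [hh₁1, show (2:ℝ) - 1 = 1 by norm_num, hg1]
  have hF0 : F 0 = α c := by
    show (if (0:ℝ) ≤ 1/2 then h₁ (2*0) else g (2-2*0)) = α c
    rw [if_pos (by norm_num : (0:ℝ) ≤ 1/2), show (2:ℝ)*0 = 0 by norm_num, hh₁0]
  have hF1 : F 1 = α c := by
    show (if (1:ℝ) ≤ 1/2 then h₁ (2*1) else g (2-2*1)) = α c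
    rw [if_neg (by norm_num : ¬((1:ℝ) ≤ 1/2)), show (2:ℝ)-2*1 = 0 by norm_num, hg0]
  have hFinj : InjOn F (Ico 0 1) := by
    have key : ∀ s t : ℝ, s ∈ Ico (0:ℝ) 1 → t ∈ Ico (0:ℝ) 1 → s ≤ 1/2 → 1/2 < t →
        F s = F t → False := by
      intro s t hs ht hs2 ht2 heq
      have hFs : F s = h₁ (2*s) := by simp only [hF]; rw [if_pos hs2]
      have hFt : F t = g (2 - 2*t) := by simp only [hF]; rw [if_neg (not_le.2 ht2)]
      have h2s : 2*s ∈ Icc (0:ℝ) 1 := ⟨by linarith [hs.1], by linarith⟩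
      have h2t : 2 - 2*t ∈ Icc (0:ℝ) 1 := ⟨by linarith [ht.2], by linarith⟩
      have hx1 : F s ∈ h₁ '' Icc 0 1 := ⟨2*s, h2s, hFs.symm⟩
      have hx2 : F s ∈ g '' Icc 0 1 := ⟨2 - 2*t, h2t, (hFt.symm.trans heq.symm)⟩
      rcases hmix _ hx1 hx2 with hc' | hd'
      · have hgg : g (2-2*t) = g 0 := by
          rw [← hFt, ← heq, hc', hg0]
        have := hginj h2t ⟨le_refl 0, zero_le_one⟩ hgg
        have ht1 : t = 1 := by linarith
        rw [ht1] at ht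
        exact absurd ht.2 (lt_irrefl 1)
      · have hgg : g (2-2*t) = g 1 := by
          rw [← hFt, ← heq, hd', hg1]
        have := hginj h2t ⟨zero_le_one, le_refl 1⟩ hgg
        have ht1 : t = 1/2 := by linarith
        rw [ht1] at ht2
        exact absurd ht2 (lt_irrefl _)
    intro s hs t ht heq
    rcases le_or_gt s (1/2) with hs2 | hs2 <;> rcases le_or_gt t (1/2) with ht2 | ht2
    · have hFs : F s = h₁ (2*s) := by simp only [hF]; rw [if_pos hs2]
      have hFt : F t = h₁ (2*t) := by simp only [hF]; rw [if_pos ht2]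
      have h2s : 2*s ∈ Icc (0:ℝ) 1 := ⟨by linarith [hs.1], by linarith⟩
      have h2t : 2*t ∈ Icc (0:ℝ) 1 := ⟨by linarith [ht.1], by linarith⟩
      have := hh₁inj h2s h2t (by rw [← hFs, ← hFt, heq])
      linarith
    · exact absurd heq (fun heq' => key s t hs ht hs2 ht2 heq')
    · exact absurd heq (fun heq' => key t s ht hs ht2 hs2 heq'.symm)
    · have hFs : F s = g (2-2*s) := by simp only [hF]; rw [if_neg (not_le.2 hs2)]
      have hFt : F t = g (2-2*t) := by simp only [hF]; rw [if_neg (not_le.2 ht2)]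
      have h2s : 2-2*s ∈ Icc (0:ℝ) 1 := ⟨by linarith [hs.2], by linarith⟩
      have h2t : 2-2*t ∈ Icc (0:ℝ) 1 := ⟨by linarith [ht.2], by linarith⟩
      have := hginj h2s h2t (by rw [← hFs, ← hFt, heq])
      linarith
  haveI : Fact ((0:ℝ) < 1) := ⟨zero_lt_one⟩
  have hFper : F 0 = F (0 + 1) := by rw [zero_add, hF0, hF1]
  set e₀ := AddCircle.liftIco 1 0 F with he₀
  have he₀c : Continuous e₀ :=
    AddCircle.liftIco_continuous hFper (by rw [zero_add]; exact hFc.continuousOn)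
  have he₀inj : Function.Injective e₀ := by
    intro z w hzw
    obtain ⟨x, hx, rfl⟩ := AddCircle.eq_coe_Ico z
    obtain ⟨y, hy, rfl⟩ := AddCircle.eq_coe_Ico w
    rw [he₀, AddCircle.liftIco_zero_coe_apply hx, AddCircle.liftIco_zero_coe_apply hy] at hzw
    rw [hFinj hx hy hzw]
  refine ⟨e₀ ∘ (AddCircle.homeomorphCircle (one_ne_zero : (1:ℝ) ≠ 0)).symm, ?_⟩
  have hec : Continuous (e₀ ∘ (AddCircle.homeomorphCircle (one_ne_zero : (1:ℝ) ≠ 0)).symm) :=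
    he₀c.comp (Homeomorph.continuous _)
  have heinj : Function.Injective (e₀ ∘ (AddCircle.homeomorphCircle (one_ne_zero : (1:ℝ) ≠ 0)).symm) :=
    he₀inj.comp (Homeomorph.injective _)
  exact (hec.isClosedEmbedding heinj).toIsEmbedding
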